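/- arXiv:1506.07147 — 2 statements merged into one kernel-verified Lean document; each statement's English description precedes it below -/
import Mathlib

section
/- Let R be a discrete valuation ring in which 2 is invertible and let F be its field of fractions. Let G and G' be symmetric n×n matrices over R that are invertible over R (i.e., the corresponding quadratic forms are unimodular). If there exists P ∈ GL_n(F) with Pᵀ·G·P = G' (the forms become isomorphic over F), then there exists Q ∈ GL_n(R) with Qᵀ·G·Q = G' (the forms are isomorphic over R). -/
open Matrix

set_option linter.unusedSectionVars false
set_option maxHeartbeats 1000000
namespace QFAux

variable {α : Type*} {β : Type*} {n : ℕ}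

section Bm
variable [CommRing α] [CommRing β]

/-- Block matrix of size `n+1` with scalar `a` in the corner, column `c`, row `r`, block `B`. -/
def bm (a : α) (c r : Fin n → α) (B : Matrix (Fin n) (Fin n) α) :
    Matrix (Fin (n + 1)) (Fin (n + 1)) α :=
  Matrix.of fun i j =>
    Fin.cases (Fin.cases a r j) (fun i' => Fin.cases (c i') (fun j' => B i' j') j) i

@[simp] lemma bm_zz (a : α) (c r : Fin n → α) (B) : bm a c r B 0 0 = a := rfl

@[simp] lemma bm_zs (a : α) (c r : Fin n → α) (B) (j : Fin n) :
    bm a c r B 0 j.succ = r j := by simp [bm]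

@[simp] lemma bm_sz (a : α) (c r : Fin n → α) (B) (i : Fin n) :
    bm a c r B i.succ 0 = c i := by simp [bm]

@[simp] lemma bm_ss (a : α) (c r : Fin n → α) (B) (i j : Fin n) :
    bm a c r B i.succ j.succ = B i j := by simp [bm]

lemma bm_transpose (a : α) (c r : Fin n → α) (B) :
    (bm a c r B)ᵀ = bm a r c Bᵀ := by
  ext i j
  induction i using Fin.cases <;> induction j using Fin.cases <;>
    simp [Matrix.transpose_apply]

lemma bm_mul (a a' : α) (c c' r r' : Fin n → α) (B B' : Matrix (Fin n) (Fin n) α) :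
    bm a c r B * bm a' c' r' B' =
      bm (a * a' + r ⬝ᵥ c') (fun i => c i * a' + (B *ᵥ c') i)
        (fun j => a * r' j + (r ᵥ* B') j) (vecMulVec c r' + B * B') := by
  ext i j
  induction i using Fin.cases <;> induction j using Fin.cases <;>
    simp [Matrix.mul_apply, Fin.sum_univ_succ, dotProduct, Matrix.mulVec, Matrix.vecMul,
      Matrix.vecMulVec_apply]

lemma bm_eta (M : Matrix (Fin (n + 1)) (Fin (n + 1)) α) :
    M = bm (M 0 0) (fun i => M i.succ 0) (fun j => M 0 j.succ)
      (M.submatrix Fin.succ Fin.succ) := by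
  ext i j
  induction i using Fin.cases <;> induction j using Fin.cases <;> simp

lemma bm_block_inj {a a' : α} {c c' r r' : Fin n → α} {B B'}
    (h : bm a c r B = bm a' c' r' B') : B = B' := by
  ext i j
  have := congrFun (congrFun h i.succ) j.succ
  simpa using this

lemma det_bm_row0 (a : α) (c : Fin n → α) (B) :
    (bm a c 0 B).det = a * B.det := by
  rw [Matrix.det_succ_row_zero, Fin.sum_univ_succ]
  have h1 : ((bm a c 0 B).submatrix Fin.succ Fin.succ) = B := by
    ext i j
    simp
  simp [Fin.succAbove_zero, h1]

lemma det_bm_col0 (a : α) (r : Fin n → α) (B) :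
    (bm a 0 r B).det = a * B.det := by
  rw [← Matrix.det_transpose, bm_transpose]
  rw [det_bm_row0, Matrix.det_transpose]

lemma bm_map (f : α →+* β) (a : α) (c r : Fin n → α) (B) :
    (bm a c r B).map f = bm (f a) (f ∘ c) (f ∘ r) (B.map f) := by
  ext i j
  induction i using Fin.cases <;> induction j using Fin.cases <;> simp [Matrix.map_apply]

lemma diagonal_eq_bm (v : Fin (n + 1) → α) :
    diagonal v = bm (v 0) 0 0 (diagonal (v ∘ Fin.succ)) := by
  ext i j
  induction i using Fin.cases <;> induction j using Fin.cases <;>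
    simp [Matrix.diagonal_apply, Fin.succ_ne_zero, (Fin.succ_ne_zero _).symm, Fin.succ_inj,
      eq_comm]

lemma bm_conj_one (B : Matrix (Fin n) (Fin n) α) (w : α) (G₁ : Matrix (Fin n) (Fin n) α) :
    (bm 1 0 0 B)ᵀ * bm w 0 0 G₁ * bm 1 0 0 B = bm w 0 0 (Bᵀ * G₁ * B) := by
  rw [bm_transpose, bm_mul, bm_mul]
  ext i j
  induction i using Fin.cases <;> induction j using Fin.cases <;>
    simp [Matrix.mulVec, Matrix.vecMul, dotProduct, Matrix.vecMulVec_apply, Matrix.mul_apply]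


end Bm

section Cong
variable [CommRing α] {m : ℕ}

/-- Congruence of square matrices. -/
def Cong (G G' : Matrix (Fin m) (Fin m) α) : Prop :=
  ∃ Q : Matrix (Fin m) (Fin m) α, IsUnit Q.det ∧ Qᵀ * G * Q = G'

lemma Cong.refl (G : Matrix (Fin m) (Fin m) α) : Cong G G :=
  ⟨1, by simp, by simp⟩

lemma Cong.trans {G G' G'' : Matrix (Fin m) (Fin m) α} (h : Cong G G') (h' : Cong G' G'') :
    Cong G G'' := by
  obtain ⟨Q, hQ, rfl⟩ := h
  obtain ⟨Q', hQ', rfl⟩ := h'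
  exact ⟨Q * Q', by rw [Matrix.det_mul]; exact hQ.mul hQ', by
    rw [Matrix.transpose_mul]; noncomm_ring⟩

lemma Cong.symm {G G' : Matrix (Fin m) (Fin m) α} (h : Cong G G') : Cong G' G := by
  obtain ⟨Q, hQ, rfl⟩ := h
  refine ⟨Q⁻¹, Q.isUnit_nonsing_inv_det hQ, ?_⟩
  have h1 : Q * Q⁻¹ = 1 := Q.mul_nonsing_inv hQ
  calc Q⁻¹ᵀ * (Qᵀ * G * Q) * Q⁻¹ = (Q * Q⁻¹)ᵀ * G * (Q * Q⁻¹) := by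
        rw [Matrix.transpose_mul]; noncomm_ring
    _ = G := by rw [h1]; simp

lemma Cong.isUnit_det {G G' : Matrix (Fin m) (Fin m) α} (h : Cong G G')
    (hG : IsUnit G.det) : IsUnit G'.det := by
  obtain ⟨Q, hQ, rfl⟩ := h
  simp only [Matrix.det_mul, Matrix.det_transpose]
  exact (hQ.mul hG).mul hQ

lemma Cong.map {β : Type*} [CommRing β] (f : α →+* β) {G G' : Matrix (Fin m) (Fin m) α}
    (h : Cong G G') : Cong (G.map f) (G'.map f) := by
  obtain ⟨Q, hQ, rfl⟩ := h
  refine ⟨Q.map f, ?_, ?_⟩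
  · rw [← RingHom.mapMatrix_apply, ← RingHom.map_det]; exact hQ.map f
  · rw [← Matrix.transpose_map, ← Matrix.map_mul, ← Matrix.map_mul]

lemma conj_apply (P M : Matrix (Fin m) (Fin m) α) (i j : Fin m) :
    (Pᵀ * M * P) i j = (fun k => P k i) ⬝ᵥ M *ᵥ (fun k => P k j) := by
  simp only [Matrix.mul_apply, Matrix.transpose_apply, dotProduct, Matrix.mulVec,
    Finset.sum_mul, Finset.mul_sum]
  rw [Finset.sum_comm]
  apply Finset.sum_congr rfl
  intro k _
  apply Finset.sum_congr rfl
  intro l _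
  ring

/-- Congruence lifts through the `bm` corner extension. -/
lemma Cong.bmLift {w : α} {G₁ D : Matrix (Fin n) (Fin n) α} (h : Cong G₁ D) :
    Cong (bm w 0 0 G₁) (bm w 0 0 D) := by
  obtain ⟨Q, hQ, rfl⟩ := h
  refine ⟨bm 1 0 0 Q, ?_, ?_⟩
  · rw [det_bm_row0]; simpa using hQ
  · rw [bm_transpose, bm_mul, bm_mul]
    ext i j
    induction i using Fin.cases <;> induction j using Fin.cases <;>
      simp [Matrix.mulVec, Matrix.vecMul, dotProduct, Matrix.vecMulVec_apply, Matrix.mul_apply]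

end Cong

section VMV
variable [CommRing α] {m : ℕ}

lemma vmv_transpose (a b : Fin m → α) : (vecMulVec a b)ᵀ = vecMulVec b a := by
  ext i j
  simp [Matrix.vecMulVec_apply, mul_comm]

lemma mul_vmv (M : Matrix (Fin m) (Fin m) α) (c d : Fin m → α) :
    M * vecMulVec c d = vecMulVec (M *ᵥ c) d := by
  ext i j
  simp only [Matrix.mul_apply, Matrix.vecMulVec_apply, Matrix.mulVec, dotProduct,
    Finset.sum_mul]
  apply Finset.sum_congr rfl
  intro k _
  ring

lemma vmv_mul (a b : Fin m → α) (M : Matrix (Fin m) (Fin m) α) :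
    vecMulVec a b * M = vecMulVec a (b ᵥ* M) := by
  ext i j
  simp only [Matrix.mul_apply, Matrix.vecMulVec_apply, Matrix.vecMul, dotProduct,
    Finset.mul_sum]
  apply Finset.sum_congr rfl
  intro k _
  ring

lemma vmv_mul_vmv (a b c d : Fin m → α) :
    vecMulVec a b * vecMulVec c d = (b ⬝ᵥ c) • vecMulVec a d := by
  ext i j
  simp only [Matrix.mul_apply, Matrix.vecMulVec_apply, Matrix.smul_apply, dotProduct,
    smul_eq_mul, Finset.sum_mul]
  apply Finset.sum_congr rfl
  intro k _
  ring

lemma vmv_mulVec (a b f : Fin m → α) :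
    vecMulVec a b *ᵥ f = (b ⬝ᵥ f) • a := by
  funext i
  simp only [Matrix.mulVec, dotProduct, Matrix.vecMulVec_apply, Pi.smul_apply, smul_eq_mul,
    Finset.sum_mul, Finset.mul_sum]
  apply Finset.sum_congr rfl
  intro k _
  ring

lemma vecMul_eq_mulVec {M : Matrix (Fin m) (Fin m) α} (hsym : Mᵀ = M) (w : Fin m → α) :
    w ᵥ* M = M *ᵥ w := by
  funext j
  simp only [Matrix.vecMul, Matrix.mulVec, dotProduct]
  apply Finset.sum_congr rfl
  intro k _
  have h : M k j = M j k := by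
    calc M k j = Mᵀ j k := rfl
      _ = M j k := by rw [hsym]
  rw [h]
  ring

lemma bilin_comm {M : Matrix (Fin m) (Fin m) α} (hsym : Mᵀ = M) (a b : Fin m → α) :
    a ⬝ᵥ M *ᵥ b = b ⬝ᵥ M *ᵥ a := by
  simp only [dotProduct, Matrix.mulVec, Finset.mul_sum]
  rw [Finset.sum_comm]
  apply Finset.sum_congr rfl
  intro k _
  apply Finset.sum_congr rfl
  intro l _
  have h : M l k = M k l := by
    calc M l k = Mᵀ k l := rfl
      _ = M k l := by rw [hsym]
  rw [h]
  ring

lemma mvec_dot {M : Matrix (Fin m) (Fin m) α} (hsym : Mᵀ = M) (a b : Fin m → α) :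
    (M *ᵥ a) ⬝ᵥ b = a ⬝ᵥ M *ᵥ b := by
  rw [dotProduct_comm, bilin_comm hsym]

end VMV

section Witt
variable {K : Type*} [Field K] {m : ℕ}

/-- Reflection in the vector `w` for the symmetric bilinear form `M`. -/
noncomputable def reflect (M : Matrix (Fin m) (Fin m) K) (w : Fin m → K) :
    Matrix (Fin m) (Fin m) K :=
  1 - (2 / (w ⬝ᵥ M *ᵥ w)) • vecMulVec w (M *ᵥ w)

lemma reflect_mulVec (M : Matrix (Fin m) (Fin m) K) (w f : Fin m → K) :
    reflect M w *ᵥ f = f - ((2 / (w ⬝ᵥ M *ᵥ w)) * ((M *ᵥ w) ⬝ᵥ f)) • w := by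
  rw [reflect, Matrix.sub_mulVec, Matrix.one_mulVec, Matrix.smul_mulVec, vmv_mulVec,
    smul_smul]

lemma reflect_conj {M : Matrix (Fin m) (Fin m) K} (hsym : Mᵀ = M) (w : Fin m → K)
    (hq : w ⬝ᵥ M *ᵥ w ≠ 0) : (reflect M w)ᵀ * M * reflect M w = M := by
  set q := w ⬝ᵥ M *ᵥ w with hqdef
  set c := 2 / q with hc
  set mv := M *ᵥ w with hmv
  have hcq : c * q = 2 := by
    rw [hc]
    field_simp
  have hτt : (reflect M w)ᵀ = 1 - c • vecMulVec mv w := by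
    rw [reflect, Matrix.transpose_sub, Matrix.transpose_one, Matrix.transpose_smul,
      vmv_transpose]
  have h1 : (reflect M w)ᵀ * M = M - c • vecMulVec mv mv := by
    rw [hτt, Matrix.sub_mul, Matrix.one_mul, Matrix.smul_mul, vmv_mul, vecMul_eq_mulVec hsym]
  have hmvw : mv ⬝ᵥ w = q := by rw [hmv, mvec_dot hsym]
  have hcc : c * (c * q) = c + c := by rw [hcq]; ring
  rw [h1, reflect]
  rw [Matrix.mul_sub, Matrix.mul_one, Matrix.sub_mul, Matrix.mul_smul, mul_vmv,
    Matrix.smul_mul, Matrix.mul_smul, vmv_mul_vmv, hmvw, ← hmv, smul_smul, smul_smul]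
  rw [← hqdef, ← hc]
  rw [show c * c * q = c + c from by rw [mul_assoc, hcq]; ring, add_smul]
  abel

lemma witt (h2 : (2 : K) ≠ 0) (u : K) (hu : u ≠ 0)
    (A A' : Matrix (Fin m) (Fin m) K) (hA : Aᵀ = A) (hdetM : (bm u 0 0 A).det ≠ 0)
    (P : Matrix (Fin (m + 1)) (Fin (m + 1)) K) (hPdet : IsUnit P.det)
    (hPc : Pᵀ * bm u 0 0 A * P = bm u 0 0 A') :
    Cong A A' := by
  set M := bm u 0 0 A with hM
  have hMsym : Mᵀ = M := by rw [hM, bm_transpose, hA]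
  set e : Fin (m + 1) → K := Pi.single 0 1 with he
  set f : Fin (m + 1) → K := fun k => P k 0 with hf
  have hrow0 : ∀ v : Fin (m + 1) → K, e ⬝ᵥ M *ᵥ v = u * v 0 := by
    intro v
    rw [he, single_dotProduct, one_mul]
    rw [hM]
    show (∑ k, bm u 0 0 A 0 k * v k) = u * v 0
    rw [Fin.sum_univ_succ]
    simp
  have hee : e ⬝ᵥ M *ᵥ e = u := by
    rw [hrow0]
    simp [he]
  have hff : f ⬝ᵥ M *ᵥ f = u := by
    have h0 := congrFun (congrFun hPc 0) 0
    rw [conj_apply] at h0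
    simpa using h0
  set β := e ⬝ᵥ M *ᵥ f with hβ
  have hfe : f ⬝ᵥ M *ᵥ e = β := by rw [hβ, bilin_comm hMsym]
  -- find S with SᵀMS = M and S *ᵥ f = e
  obtain ⟨S, hSc, hSf⟩ : ∃ S : Matrix (Fin (m + 1)) (Fin (m + 1)) K,
      Sᵀ * M * S = M ∧ S *ᵥ f = e := by
    by_cases hβu : β = u
    · -- w = e + f , two reflections
      set w : Fin (m + 1) → K := e + f with hw
      have hqw : w ⬝ᵥ M *ᵥ w = 4 * u := by
        rw [hw, Matrix.mulVec_add, dotProduct_add, add_dotProduct, add_dotProduct, hee, hff,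
          hfe, ← hβ, hβu]
        ring
      have hqw0 : w ⬝ᵥ M *ᵥ w ≠ 0 := by
        rw [hqw]
        have h4 : (4 : K) = 2 * 2 := by norm_num
        rw [h4]
        exact mul_ne_zero (mul_ne_zero h2 h2) hu
      have hwf : (M *ᵥ w) ⬝ᵥ f = 2 * u := by
        rw [mvec_dot hMsym, hw, add_dotProduct, ← hβ, hff, hβu]
        ring
      have hqe0 : e ⬝ᵥ M *ᵥ e ≠ 0 := by rw [hee]; exact hu
      have hτ1f : reflect M w *ᵥ f = -e := by
        rw [reflect_mulVec, hqw, hwf]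
        have h40 : (4 : K) ≠ 0 := by
          intro h
          rw [show (4 : K) = 2 * 2 from by norm_num] at h
          exact mul_ne_zero h2 h2 h
        have hco : 2 / (4 * u) * (2 * u) = 1 := by
          rw [div_mul_eq_mul_div, div_eq_one_iff_eq (mul_ne_zero h40 hu)]
          ring
        rw [hco, one_smul, hw]
        abel
      have hτ2f : reflect M e *ᵥ (-e) = e := by
        rw [reflect_mulVec]
        have hco2 : 2 / (e ⬝ᵥ M *ᵥ e) * ((M *ᵥ e) ⬝ᵥ (-e)) = -2 := by
          rw [dotProduct_neg, mvec_dot hMsym, hee]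
          rw [mul_neg, div_mul_eq_mul_div, neg_eq_iff_eq_neg, div_eq_iff hu]
          ring
        rw [hco2, neg_smul, sub_neg_eq_add]
        have h2e : (2 : K) • e = e + e := two_smul K e
        rw [h2e]
        abel
      refine ⟨reflect M e * reflect M w, ?_, ?_⟩
      · calc (reflect M e * reflect M w)ᵀ * M * (reflect M e * reflect M w)
            = (reflect M w)ᵀ * ((reflect M e)ᵀ * M * reflect M e) * reflect M w := by
              rw [Matrix.transpose_mul]; noncomm_ring
          _ = (reflect M w)ᵀ * M * reflect M w := by rw [reflect_conj hMsym e hqe0]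
          _ = M := reflect_conj hMsym w hqw0
      · rw [← Matrix.mulVec_mulVec, hτ1f, hτ2f]
    · -- w = e - f , one reflection
      set w : Fin (m + 1) → K := e - f with hw
      have hqw : w ⬝ᵥ M *ᵥ w = 2 * (u - β) := by
        rw [hw, Matrix.mulVec_sub, dotProduct_sub, sub_dotProduct, sub_dotProduct, hee, hff,
          hfe, ← hβ]
        ring
      have hub : u - β ≠ 0 := sub_ne_zero.mpr (Ne.symm hβu)
      have hqw0 : w ⬝ᵥ M *ᵥ w ≠ 0 := by
        rw [hqw]
        exact mul_ne_zero h2 hub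
      have hwf : (M *ᵥ w) ⬝ᵥ f = β - u := by
        rw [mvec_dot hMsym, hw, sub_dotProduct, ← hβ, hff]
      refine ⟨reflect M w, reflect_conj hMsym w hqw0, ?_⟩
      rw [reflect_mulVec, hqw, hwf]
      have hco : 2 / (2 * (u - β)) * (β - u) = -1 := by
        rw [div_mul_eq_mul_div, div_eq_iff (mul_ne_zero h2 hub)]
        ring
      rw [hco, neg_one_smul, sub_neg_eq_add, hw]
      abel
  -- now  P₂ = S * P  has first column e and first row (1,0,…,0)
  set P₂ := S * P with hP₂
  have hP₂c : P₂ᵀ * M * P₂ = bm u 0 0 A' := by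
    rw [hP₂, Matrix.transpose_mul]
    calc Pᵀ * Sᵀ * M * (S * P) = Pᵀ * (Sᵀ * M * S) * P := by noncomm_ring
      _ = Pᵀ * M * P := by rw [hSc]
      _ = bm u 0 0 A' := hPc
  have hcol : ∀ k, P₂ k 0 = e k := by
    intro k
    have h1 : P₂ k 0 = (S *ᵥ f) k := by
      rw [hP₂]
      simp [Matrix.mul_apply, Matrix.mulVec, dotProduct, hf]
    rw [h1, hSf]
  have hrow : ∀ j : Fin m, P₂ 0 j.succ = 0 := by
    intro j
    have h1 := congrFun (congrFun hP₂c 0) j.succ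
    rw [conj_apply] at h1
    have hcf : (fun k => P₂ k 0) = e := funext hcol
    rw [hcf, hrow0] at h1
    have h2 : (bm u 0 0 A' : Matrix (Fin (m + 1)) (Fin (m + 1)) K) 0 j.succ = 0 := by simp
    rw [h2] at h1
    exact (mul_eq_zero.mp h1).resolve_left hu
  set B := P₂.submatrix Fin.succ Fin.succ with hB
  have hP₂bm : P₂ = bm 1 0 0 B := by
    ext i j
    induction i using Fin.cases with
    | zero =>
      induction j using Fin.cases with
      | zero =>
        rw [bm_zz, hcol 0]
        simp [he]
      | succ j =>
        rw [bm_zs, hrow j]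
        simp
    | succ i =>
      induction j using Fin.cases with
      | zero =>
        rw [bm_sz, hcol i.succ]
        simp [he, Fin.succ_ne_zero]
      | succ j =>
        rw [bm_ss, hB]
        rfl
  have hfinal : bm u 0 0 (Bᵀ * A * B) = bm u 0 0 A' := by
    calc bm u 0 0 (Bᵀ * A * B) = (bm 1 0 0 B)ᵀ * bm u 0 0 A * bm 1 0 0 B :=
          (bm_conj_one B u A).symm
      _ = P₂ᵀ * M * P₂ := by rw [← hP₂bm, hM]
      _ = bm u 0 0 A' := hP₂c
  have hAB : Bᵀ * A * B = A' := bm_block_inj hfinal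
  have hdetS : S.det ≠ 0 := by
    have hd := congrArg Matrix.det hSc
    rw [Matrix.det_mul, Matrix.det_mul, Matrix.det_transpose] at hd
    intro h0
    rw [h0, zero_mul, zero_mul] at hd
    exact hdetM hd.symm
  have hdetB : IsUnit B.det := by
    have h1 : P₂.det = B.det := by rw [hP₂bm, det_bm_row0, one_mul]
    have h2' : P₂.det = S.det * P.det := by rw [hP₂, Matrix.det_mul]
    rw [isUnit_iff_ne_zero, ← h1, h2']
    exact mul_ne_zero hdetS (isUnit_iff_ne_zero.mp hPdet)
  exact ⟨B, hdetB, hAB⟩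

end Witt

section BmExtra
variable [CommRing α]

lemma diagonal_cons (w : α) {n : ℕ} (v : Fin n → α) :
    diagonal (Fin.cons w v) = bm w 0 0 (diagonal v) := by
  ext i j
  induction i using Fin.cases <;> induction j using Fin.cases <;>
    simp [Matrix.diagonal_apply, Fin.succ_ne_zero, (Fin.succ_ne_zero _).symm, Fin.succ_inj,
      eq_comm]

end BmExtra

section LocalHelpers
variable {R : Type*} [CommRing R] [IsLocalRing R]

lemma nonunit_add' {a b : R} (ha : ¬IsUnit a) (hb : ¬IsUnit b) : ¬IsUnit (a + b) := fun h =>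
  (IsLocalRing.isUnit_or_isUnit_of_isUnit_add h).elim ha hb

lemma nonunit_sub' {a b : R} (ha : ¬IsUnit a) (hb : ¬IsUnit b) : ¬IsUnit (a - b) := by
  rw [sub_eq_add_neg]
  exact nonunit_add' ha (fun h => hb (by simpa using h.neg))

lemma unit_add_nonunit' {a b : R} (ha : IsUnit a) (hb : ¬IsUnit b) : IsUnit (a + b) := by
  by_contra h
  have h' := nonunit_sub' h hb
  simp only [add_sub_cancel_right] at h'
  exact h' ha

end LocalHelpers

section Split
variable [CommRing α] {m : ℕ}

lemma perm_conj (σ : Equiv.Perm (Fin m)) (M : Matrix (Fin m) (Fin m) α) :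
    Cong M (M.submatrix σ σ) := by
  refine ⟨(σ.toPEquiv.toMatrix)ᵀ, ?_, ?_⟩
  · rw [Matrix.det_transpose]
    have : (σ.toPEquiv.toMatrix : Matrix (Fin m) (Fin m) α).det = Equiv.Perm.sign σ :=
      Matrix.det_permutation σ
    rw [this]
    rcases Int.units_eq_one_or (Equiv.Perm.sign σ) with h | h <;> simp [h]
  · rw [Matrix.transpose_transpose, PEquiv.toMatrix_toPEquiv_mul]
    rw [← PEquiv.toMatrix_symm, ← Equiv.toPEquiv_symm]
    rw [PEquiv.mul_toMatrix_toPEquiv, Matrix.submatrix_submatrix]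
    simp

lemma quad_reindex (σ : Equiv.Perm (Fin m)) (M : Matrix (Fin m) (Fin m) α) (x : Fin m → α) :
    (fun i => x (σ i)) ⬝ᵥ ((M.submatrix σ σ) *ᵥ fun i => x (σ i)) = x ⬝ᵥ (M *ᵥ x) := by
  simp only [dotProduct, Matrix.mulVec, Matrix.submatrix_apply]
  rw [← Equiv.sum_comp σ (fun i => x i * ∑ j, M i j * x j)]
  apply Finset.sum_congr rfl
  intro i _
  congr 1
  rw [← Equiv.sum_comp σ (fun j => M (σ i) j * x j)]

lemma split (G : Matrix (Fin (m + 1)) (Fin (m + 1)) α)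
    (hsym : Gᵀ = G) (x : Fin (m + 1) → α) (i₀ : Fin (m + 1)) (hxi : IsUnit (x i₀))
    (w : α) (hw : IsUnit w) (hq : x ⬝ᵥ (G *ᵥ x) = w) :
    ∃ G₁ : Matrix (Fin m) (Fin m) α, G₁ᵀ = G₁ ∧ Cong G (bm w 0 0 G₁) := by
  set σ : Equiv.Perm (Fin (m + 1)) := Equiv.swap 0 i₀ with hσ
  set G2 := G.submatrix σ σ with hG2
  set x2 : Fin (m + 1) → α := fun i => x (σ i) with hx2
  have hx20 : IsUnit (x2 0) := by
    rw [hx2]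
    simpa [hσ, Equiv.swap_apply_left] using hxi
  have hq2 : x2 ⬝ᵥ (G2 *ᵥ x2) = w := by
    rw [hx2, hG2, quad_reindex]; exact hq
  have hsym2 : G2ᵀ = G2 := by
    ext i j
    calc G2ᵀ i j = G (σ j) (σ i) := rfl
      _ = Gᵀ (σ i) (σ j) := rfl
      _ = G (σ i) (σ j) := by rw [hsym]
      _ = G2 i j := rfl
  set E := bm (x2 0) (fun i => x2 i.succ) 0 1 with hE
  have hEdet : IsUnit E.det := by
    rw [hE, det_bm_row0, Matrix.det_one, mul_one]
    exact hx20
  have hcol : (fun k => E k 0) = x2 := by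
    funext k
    induction k using Fin.cases <;> simp [hE]
  set G3 := Eᵀ * G2 * E with hG3
  have hsym3 : G3ᵀ = G3 := by
    rw [hG3, Matrix.transpose_mul, Matrix.transpose_mul, Matrix.transpose_transpose, hsym2,
      Matrix.mul_assoc]
  have h300 : G3 0 0 = w := by
    rw [hG3, conj_apply, hcol]
    exact hq2
  set gr : Fin m → α := fun j => G3 0 j.succ with hgr
  have hgc : ∀ i, G3 i.succ 0 = gr i := by
    intro i
    calc G3 i.succ 0 = G3ᵀ 0 i.succ := rfl
      _ = G3 0 i.succ := by rw [hsym3]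
  set wi : α := ↑hw.unit⁻¹ with hwi
  have hww : w * wi = 1 := by rw [hwi, mul_comm]; exact hw.val_inv_mul
  set C := bm 1 0 (fun j => -(wi * gr j)) 1 with hC
  have hCdet : IsUnit C.det := by
    rw [hC, det_bm_col0, Matrix.det_one, mul_one]
    exact isUnit_one
  set G₁ := vecMulVec (fun j => -(wi * gr j)) gr + G3.submatrix Fin.succ Fin.succ with hG₁
  have hG3bm : G3 = bm w gr gr (G3.submatrix Fin.succ Fin.succ) := by
    ext i j
    induction i using Fin.cases with
    | zero =>
      induction j using Fin.cases with
      | zero => simpa using h300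
      | succ j => simp [hgr]
    | succ i =>
      induction j using Fin.cases with
      | zero => simpa using hgc i
      | succ j => simp
  have key : Cᵀ * G3 * C = bm w 0 0 G₁ := by
    rw [hG3bm, hC, bm_transpose, bm_mul, bm_mul]
    ext i j
    induction i using Fin.cases with
    | zero =>
      induction j using Fin.cases with
      | zero => simp
      | succ j =>
        simp [Matrix.vecMul_one, Matrix.mulVec_zero]
        linear_combination (-(gr j)) * hww
    | succ i =>
      induction j using Fin.cases with
      | zero =>
        simp [Matrix.mulVec_zero]
        linear_combination (-(gr i)) * hww
      | succ j =>
        simp [hG₁, Matrix.vecMulVec_apply, Matrix.mul_apply]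
        linear_combination (-(wi * gr i * gr j)) * hww
  have hG₁sym : G₁ᵀ = G₁ := by
    ext i j
    have hblk : G3 j.succ i.succ = G3 i.succ j.succ := by
      calc G3 j.succ i.succ = G3ᵀ i.succ j.succ := rfl
        _ = G3 i.succ j.succ := by rw [hsym3]
    simp [hG₁, Matrix.vecMulVec_apply, hblk]
    ring
  refine ⟨G₁, hG₁sym, ?_⟩
  refine (perm_conj σ G).trans ?_
  refine (Cong.trans ⟨E, hEdet, rfl⟩ ?_ : Cong G2 (bm w 0 0 G₁))
  exact ⟨C, hCdet, key⟩

end Split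

section Diag
variable {R : Type*} [CommRing R] [IsLocalRing R]

lemma diag (h2 : IsUnit (2 : R)) :
    ∀ (m : ℕ) (G : Matrix (Fin m) (Fin m) R), Gᵀ = G → IsUnit G.det →
      ∃ v : Fin m → R, (∀ i, IsUnit (v i)) ∧ Cong G (diagonal v) := by
  intro m
  induction m with
  | zero =>
    intro G _ _
    exact ⟨fun i => i.elim0, fun i => i.elim0, ⟨1, by simp, by ext i j; exact i.elim0⟩⟩
  | succ m ih =>
    intro G hsym hdet
    obtain ⟨x, i₀, hxi, hw⟩ : ∃ (x : Fin (m + 1) → R) (i₀ : Fin (m + 1)),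
        IsUnit (x i₀) ∧ IsUnit (x ⬝ᵥ (G *ᵥ x)) := by
      by_cases hd : ∃ i, IsUnit (G i i)
      · obtain ⟨i, hi⟩ := hd
        refine ⟨Pi.single i 1, i, by simp, ?_⟩
        simpa [Matrix.mulVec_single, single_dotProduct] using hi
      · push_neg at hd
        have hex : ∃ i j, IsUnit (G i j) := by
          by_contra hall
          push_neg at hall
          have hmem : ∀ i j, G i j ∈ IsLocalRing.maximalIdeal R := fun i j => by
            rw [IsLocalRing.mem_maximalIdeal]
            exact hall i j
          have hdm : G.det ∈ IsLocalRing.maximalIdeal R := by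
            rw [Matrix.det_apply]
            apply Ideal.sum_mem
            intro σ _
            rw [Units.smul_def, zsmul_eq_mul]
            apply Ideal.mul_mem_left
            rw [← Finset.mul_prod_erase Finset.univ (fun i => G (σ i) i) (Finset.mem_univ 0)]
            exact Ideal.mul_mem_right _ _ (hmem (σ 0) 0)
          exact (IsLocalRing.mem_maximalIdeal _).mp hdm hdet
        obtain ⟨i, j, hij⟩ := hex
        have hne : i ≠ j := fun h => (hd i) (by rw [h] at hij ⊢; exact hij)
        refine ⟨Pi.single i 1 + Pi.single j 1, i, ?_, ?_⟩
        · have hv1 : ((Pi.single i 1 + Pi.single j 1 : Fin (m + 1) → R)) i = 1 := by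
            simp [Pi.single_eq_same, Pi.single_eq_of_ne hne]
          rw [hv1]
          exact isUnit_one
        · have hq : (Pi.single i 1 + Pi.single j 1) ⬝ᵥ
              (G *ᵥ (Pi.single i 1 + Pi.single j 1)) = G i i + G i j + (G j i + G j j) := by
            simp [Matrix.mulVec_add, Matrix.mulVec_single, add_dotProduct,
              dotProduct_add, single_dotProduct]
            ring
          rw [hq]
          have hji : G j i = G i j := by
            calc G j i = Gᵀ i j := rfl
              _ = G i j := by rw [hsym]
          have hre : G i i + G i j + (G j i + G j j) = 2 * G i j + (G i i + G j j) := by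
            rw [hji]; ring
          rw [hre]
          exact unit_add_nonunit' (h2.mul hij) (nonunit_add' (hd i) (hd j))
    obtain ⟨G₁, hG₁sym, hcong⟩ := split G hsym x i₀ hxi _ hw rfl
    have hdet1 : IsUnit G₁.det := by
      have h1 := hcong.isUnit_det hdet
      rw [det_bm_row0] at h1
      exact isUnit_of_mul_isUnit_right h1
    obtain ⟨v₁, hv₁, hcong1⟩ := ih G₁ hG₁sym hdet1
    refine ⟨Fin.cons (x ⬝ᵥ (G *ᵥ x)) v₁, ?_, ?_⟩
    · intro i
      induction i using Fin.cases with
      | zero => simpa using hw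
      | succ i => simpa using hv₁ i
    · refine hcong.trans ?_
      have hlift := Cong.bmLift (w := x ⬝ᵥ (G *ᵥ x)) hcong1
      refine hlift.trans ?_
      rw [diagonal_cons]
      exact Cong.refl _

end Diag

section DVR

variable {R : Type*} [CommRing R] [IsDomain R] [IsDiscreteValuationRing R]
variable {F : Type*} [Field F] [Algebra R F] [IsFractionRing R F]

lemma nonunit_add {a b : R} (ha : ¬IsUnit a) (hb : ¬IsUnit b) : ¬IsUnit (a + b) := fun h =>
  (IsLocalRing.isUnit_or_isUnit_of_isUnit_add h).elim ha hb

lemma nonunit_sub {a b : R} (ha : ¬IsUnit a) (hb : ¬IsUnit b) : ¬IsUnit (a - b) := by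
  rw [sub_eq_add_neg]
  exact nonunit_add ha (fun h => hb (by simpa using h.neg))

lemma unit_add_nonunit {a b : R} (ha : IsUnit a) (hb : ¬IsUnit b) : IsUnit (a + b) := by
  by_contra h
  have h' := nonunit_sub h hb
  simp only [add_sub_cancel_right] at h'
  exact h' ha

lemma nonunit_of_mul_left {a b : R} (ha : ¬IsUnit a) : ¬IsUnit (a * b) := fun h =>
  ha (isUnit_of_mul_isUnit_left h)

lemma nonunit_dvd {ϖ : R} (hϖ : Irreducible ϖ) {a : R} (ha : ¬IsUnit a) : ϖ ∣ a := by
  rcases eq_or_ne a 0 with rfl | h0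
  · exact dvd_zero ϖ
  obtain ⟨k, u, rfl⟩ := IsDiscreteValuationRing.eq_unit_mul_pow_irreducible h0 hϖ
  cases k with
  | zero => exact absurd (by simpa using u.isUnit) ha
  | succ k => exact Dvd.intro_left (u * ϖ ^ k) (by ring)

/-- The key identity producing an integral representation. -/
lemma key_identity {u v t X Y Z : R} (h2 : IsUnit (2 : R)) (hu : IsUnit u)
    (hX : IsUnit X) (hY : IsUnit Y) (hZ : ¬IsUnit Z)
    (heq : u * X ^ 2 + v * Y ^ 2 = t * Z ^ 2) :
    ∃ x y : R, u * x ^ 2 + v * y ^ 2 = t := by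
  set ui : R := ↑hu.unit⁻¹ with hui_def
  set Xi : R := ↑hX.unit⁻¹ with hXi_def
  have huu : u * ui = 1 := by rw [hui_def, mul_comm]; exact hu.val_inv_mul
  have hXX : X * Xi = 1 := by rw [hXi_def, mul_comm]; exact hX.val_inv_mul
  set τ : R := t * ui with hτ
  set w : R := Z * Xi with hw
  set D : R := 2 - w * (1 + τ) with hD
  have hDu : IsUnit D := by
    rw [hD, sub_eq_add_neg]
    refine unit_add_nonunit h2 ?_
    simp only [IsUnit.neg_iff]
    intro h
    rw [hw, mul_assoc] at h
    exact hZ (isUnit_of_mul_isUnit_left h)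
  set Di : R := ↑hDu.unit⁻¹ with hDi_def
  have hDD : D * Di = 1 := by rw [hDi_def, mul_comm]; exact hDu.val_inv_mul
  set y : R := (1 - τ) * Di with hy
  set x : R := y + τ * (1 - w * y) with hx
  have h1 : y * D = 1 - τ := by
    rw [hy]
    linear_combination (1 - τ) * hDD
  have h4 : x ^ 2 - (1 - τ * w ^ 2) * y ^ 2 = τ := by
    have h2' : x + y = 1 + w * y := by
      rw [hx]
      linear_combination h1 - y * hD
    have h3 : x - y = τ * (1 - w * y) := by rw [hx]; ring
    linear_combination (x - y) * h2' + (1 + w * y) * h3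
  have hut : u * τ = t := by
    rw [hτ]
    linear_combination t * huu
  refine ⟨x, y * Y * Xi, ?_⟩
  have hvy : v * (y * Y * Xi) ^ 2 = t * w ^ 2 * y ^ 2 - u * y ^ 2 := by
    have e1 : v * (y * Y * Xi) ^ 2 = (v * Y ^ 2) * (y ^ 2 * Xi ^ 2) := by ring
    have e2 : v * Y ^ 2 = t * Z ^ 2 - u * X ^ 2 := by linear_combination heq
    rw [e1, e2, hw]
    linear_combination (-(u * y ^ 2 * (X * Xi + 1))) * hXX
  rw [hvy]
  linear_combination u * h4 + (1 - w ^ 2 * y ^ 2) * hut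

lemma Baux {ϖ : R} (hϖ : Irreducible ϖ) (h2 : IsUnit (2 : R)) {u v t : R} (hu : IsUnit u)
    (hv : IsUnit v ∨ ∃ v₀ : R, IsUnit v₀ ∧ v = ϖ * v₀) :
    ∀ k : ℕ, ∀ X Y W : R, IsUnit W → u * X ^ 2 + v * Y ^ 2 = t * (W * ϖ ^ k) ^ 2 →
      ∃ x y : R, u * x ^ 2 + v * y ^ 2 = t := by
  have hprime : Prime ϖ := hϖ.prime
  have hϖnu : ¬IsUnit ϖ := hϖ.not_isUnit
  have hϖ0 : ϖ ≠ 0 := hprime.ne_zero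
  intro k
  induction k with
  | zero =>
    intro X Y W hW heq
    set Wi : R := ↑hW.unit⁻¹ with hWi_def
    have hWW : W * Wi = 1 := by rw [hWi_def, mul_comm]; exact hW.val_inv_mul
    refine ⟨X * Wi, Y * Wi, ?_⟩
    have : (u * X ^ 2 + v * Y ^ 2) * Wi ^ 2 = t * (W * ϖ ^ 0) ^ 2 * Wi ^ 2 := by rw [heq]
    calc u * (X * Wi) ^ 2 + v * (Y * Wi) ^ 2 = (u * X ^ 2 + v * Y ^ 2) * Wi ^ 2 := by ring
      _ = t * (W * ϖ ^ 0) ^ 2 * Wi ^ 2 := by rw [heq]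
      _ = t * (W * Wi) ^ 2 := by ring
      _ = t := by rw [hWW]; ring
  | succ k ih =>
    intro X Y W hW heq
    have hZnu : ¬IsUnit (W * ϖ ^ (k + 1)) := by
      intro h
      exact hϖnu ((isUnit_pow_iff (Nat.succ_ne_zero k)).mp (isUnit_of_mul_isUnit_right h))
    by_cases hX : IsUnit X
    · rcases hv with hvu | ⟨v₀, hv₀, rfl⟩
      · -- v a unit : Y must be a unit, use the key identity
        have hY : IsUnit Y := by
          by_contra hY
          have h1 : ¬IsUnit (t * (W * ϖ ^ (k + 1)) ^ 2) :=
            fun h => hZnu ((isUnit_pow_iff (by norm_num : (2:ℕ) ≠ 0)).mp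
              (isUnit_of_mul_isUnit_right h))
          have h2' : ¬IsUnit (v * Y ^ 2) := fun h =>
            hY ((isUnit_pow_iff (by norm_num : (2:ℕ) ≠ 0)).mp (isUnit_of_mul_isUnit_right h))
          have : ¬IsUnit (u * X ^ 2) := by
            have : u * X ^ 2 = t * (W * ϖ ^ (k + 1)) ^ 2 - v * Y ^ 2 := by
              linear_combination heq
            rw [this]
            exact nonunit_sub h1 h2'
          exact this (hu.mul (hX.pow 2))
        exact key_identity h2 hu hX hY hZnu heq
      · -- v = ϖ * v₀ : impossible since u * X ^ 2 would be a unit equal to a nonunit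
        exfalso
        have h1 : ¬IsUnit (t * (W * ϖ ^ (k + 1)) ^ 2) :=
          fun h => hZnu ((isUnit_pow_iff (by norm_num : (2:ℕ) ≠ 0)).mp
            (isUnit_of_mul_isUnit_right h))
        have h2' : ¬IsUnit (ϖ * v₀ * Y ^ 2) := fun h =>
          hϖnu (isUnit_of_mul_isUnit_left (isUnit_of_mul_isUnit_left h))
        have h3 : u * X ^ 2 = t * (W * ϖ ^ (k + 1)) ^ 2 - ϖ * v₀ * Y ^ 2 := by
          linear_combination heq
        have h4 : IsUnit (u * X ^ 2) := hu.mul (hX.pow 2)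
        rw [h3] at h4
        exact nonunit_sub h1 h2' h4
    · -- X is divisible by ϖ, and then so is Y ; divide by ϖ ^ 2 and recurse
      obtain ⟨X₁, rfl⟩ := nonunit_dvd hϖ hX
      have hdvdY : ϖ ∣ Y := by
        rcases hv with hvu | ⟨v₀, hv₀, rfl⟩
        · have : ϖ ^ 2 ∣ v * Y ^ 2 := by
            refine ⟨t * W ^ 2 * ϖ ^ (2 * k) - u * X₁ ^ 2, ?_⟩
            linear_combination heq - v * Y ^ 2 * (1 : R) * (0 : R) + (by ring :
              t * (W * ϖ ^ (k + 1)) ^ 2 - u * (ϖ * X₁) ^ 2 =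
                ϖ ^ 2 * (t * W ^ 2 * ϖ ^ (2 * k) - u * X₁ ^ 2))
          have hdvd2 : ϖ ∣ Y ^ 2 := by
            have h0 : ϖ ∣ v * Y ^ 2 := dvd_trans (dvd_pow_self ϖ (by norm_num : (2:ℕ) ≠ 0)) this
            rcases hprime.dvd_mul.mp h0 with h | h
            · exact absurd (isUnit_of_dvd_unit h hvu) hϖnu
            · exact h
          exact hprime.dvd_of_dvd_pow hdvd2
        · -- v = ϖ v₀
          have hcan : v₀ * Y ^ 2 = ϖ * (t * W ^ 2 * ϖ ^ (2 * k) - u * X₁ ^ 2) := by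
            have hϖne : ϖ ≠ 0 := hϖ0
            apply mul_left_cancel₀ hϖne
            linear_combination heq
          have : ϖ ∣ v₀ * Y ^ 2 := ⟨_, hcan⟩
          rcases hprime.dvd_mul.mp this with h | h
          · exact absurd (isUnit_of_dvd_unit h hv₀) hϖnu
          · exact hprime.dvd_of_dvd_pow h
      obtain ⟨Y₁, rfl⟩ := hdvdY
      refine ih X₁ Y₁ W hW ?_
      have hϖ2 : (ϖ : R) ^ 2 ≠ 0 := pow_ne_zero 2 hϖ0
      apply mul_left_cancel₀ hϖ2
      linear_combination heq

lemma Blem {ϖ : R} (hϖ : Irreducible ϖ) (h2 : IsUnit (2 : R)) {u v t : R} (hu : IsUnit u)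
    (hv : IsUnit v ∨ ∃ v₀ : R, IsUnit v₀ ∧ v = ϖ * v₀) {X Y Z : R} (hZ : Z ≠ 0)
    (heq : u * X ^ 2 + v * Y ^ 2 = t * Z ^ 2) :
    ∃ x y : R, u * x ^ 2 + v * y ^ 2 = t := by
  obtain ⟨k, w, hwk⟩ := IsDiscreteValuationRing.eq_unit_mul_pow_irreducible hZ hϖ
  exact Baux hϖ h2 hu hv k X Y w w.isUnit (by rw [← hwk]; exact heq)

end DVR

section Rep

variable {R : Type*} [CommRing R] [IsDomain R] [IsDiscreteValuationRing R]
variable {F : Type*} [Field F] [Algebra R F] [IsFractionRing R F]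

lemma sq_descend (x : F) (c : R) (h : x ^ 2 = algebraMap R F c) :
    ∃ y : R, algebraMap R F y = x := by
  have : IsIntegral R x := by
    refine ⟨Polynomial.X ^ 2 - Polynomial.C c, Polynomial.monic_X_pow_sub_C c (by norm_num), ?_⟩
    simp [h]
  exact IsIntegrallyClosed.isIntegral_iff.mp this

lemma sqclass {ϖ : R} (hϖ : Irreducible ϖ) (ξ : F) (hξ : ξ ≠ 0) :
    ∃ (b : F) (c : R), c ≠ 0 ∧
      (IsUnit c ∨ ∃ v₀ : R, IsUnit v₀ ∧ c = ϖ * v₀) ∧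
      ξ = algebraMap R F c * b ^ 2 := by
  obtain ⟨z, s, hs, hzs⟩ := IsFractionRing.div_surjective (A := R) ξ
  have hsne : s ≠ 0 := nonZeroDivisors.ne_zero hs
  have hsF : algebraMap R F s ≠ 0 :=
    IsFractionRing.to_map_ne_zero_of_mem_nonZeroDivisors hs
  have hzne : z ≠ 0 := by
    rintro rfl
    rw [← hzs] at hξ
    simp at hξ
  have hzsne : z * s ≠ 0 := mul_ne_zero hzne hsne
  obtain ⟨k, u, hk⟩ := IsDiscreteValuationRing.eq_unit_mul_pow_irreducible hzsne hϖ
  refine ⟨algebraMap R F (ϖ ^ (k / 2)) / algebraMap R F s, ϖ ^ (k % 2) * u, ?_, ?_, ?_⟩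
  · exact mul_ne_zero (pow_ne_zero _ hϖ.prime.ne_zero) u.ne_zero
  · rcases Nat.mod_two_eq_zero_or_one k with h | h
    · left; rw [h]; simpa using u.isUnit
    · right; exact ⟨u, u.isUnit, by rw [h, pow_one]⟩
  · have hk2 : ϖ ^ (k % 2) * ϖ ^ (2 * (k / 2)) = ϖ ^ k := by
      rw [← pow_add]
      congr 1
      omega
    have hnum : (ϖ ^ (k % 2) * (u : R)) * (ϖ ^ (k / 2)) ^ 2 = z * s := by
      rw [hk, ← hk2]; ring
    rw [← hzs, div_pow, ← mul_div_assoc, div_eq_div_iff hsF (pow_ne_zero 2 hsF)]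
    calc algebraMap R F z * algebraMap R F s ^ 2
        = algebraMap R F (z * s) * algebraMap R F s := by rw [_root_.map_mul]; ring
      _ = algebraMap R F ((ϖ ^ (k % 2) * (u : R)) * (ϖ ^ (k / 2)) ^ 2) * algebraMap R F s := by
          rw [hnum]
      _ = algebraMap R F (ϖ ^ (k % 2) * (u : R)) * algebraMap R F (ϖ ^ (k / 2)) ^ 2
            * algebraMap R F s := by rw [_root_.map_mul, map_pow]

lemma rep {ϖ : R} (hϖ : Irreducible ϖ) (h2 : IsUnit (2 : R)) :
    ∀ (m : ℕ) (u : Fin m → R), (∀ i, IsUnit (u i)) → ∀ (t : R) (a : Fin m → F),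
      (∑ i, algebraMap R F (u i) * a i ^ 2) = algebraMap R F t →
      ∃ x : Fin m → R, ∑ i, u i * x i ^ 2 = t := by
  have hinj : Function.Injective (algebraMap R F) := IsFractionRing.injective R F
  intro m
  induction m with
  | zero =>
    intro u hu t a h
    refine ⟨fun i => i.elim0, ?_⟩
    simp only [Finset.univ_eq_empty, Finset.sum_empty] at h ⊢
    exact hinj (by rw [← h, map_zero])
  | succ m ih =>
    intro u hu t a h
    rw [Fin.sum_univ_succ] at h
    set r : F := ∑ i : Fin m, algebraMap R F (u i.succ) * a i.succ ^ 2 with hr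
    by_cases hr0 : r = 0
    · -- t = u 0 * a 0 ^ 2
      set ui : R := ↑(hu 0).unit⁻¹ with hui_def
      have huu : u 0 * ui = 1 := by rw [hui_def, mul_comm]; exact (hu 0).val_inv_mul
      have h' : algebraMap R F (u 0) * a 0 ^ 2 = algebraMap R F t := by
        rw [← h, hr0, add_zero]
      have ha0 : a 0 ^ 2 = algebraMap R F (ui * t) := by
        rw [_root_.map_mul, ← h']
        calc a 0 ^ 2 = (algebraMap R F ui * algebraMap R F (u 0)) * a 0 ^ 2 := by
              rw [← _root_.map_mul, mul_comm ui (u 0), huu, _root_.map_one, one_mul]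
          _ = algebraMap R F ui * (algebraMap R F (u 0) * a 0 ^ 2) := by ring
      obtain ⟨x0, hx0⟩ := sq_descend (a 0) (ui * t) ha0
      refine ⟨Fin.cons x0 0, ?_⟩
      have hx0t : u 0 * x0 ^ 2 = t := by
        apply hinj
        rw [_root_.map_mul, map_pow, hx0, h']
      rw [Fin.sum_univ_succ]
      simp only [Fin.cons_zero, Fin.cons_succ]
      simpa using hx0t
    · obtain ⟨b, c, hc0, hcalt, hbc⟩ := sqclass hϖ r hr0
      have hb0 : b ≠ 0 := by
        rintro rfl
        simp at hbc
        exact hr0 hbc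
      -- clear denominators for the pair (a 0, b)
      obtain ⟨s, hsint⟩ := IsLocalization.exist_integer_multiples_of_finite
        (nonZeroDivisors R) ![a 0, b]
      obtain ⟨X, hX⟩ := hsint 0
      obtain ⟨Y, hY⟩ := hsint 1
      simp only [Matrix.cons_val_zero, Matrix.cons_val_one, Matrix.head_cons] at hX hY
      have hX' : algebraMap R F X = algebraMap R F (s : R) * a 0 := by
        rw [hX, Algebra.smul_def]
      have hY' : algebraMap R F Y = algebraMap R F (s : R) * b := by
        rw [hY, Algebra.smul_def]
      have hs0 : (s : R) ≠ 0 := nonZeroDivisors.ne_zero s.2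
      have hsum : algebraMap R F (u 0) * a 0 ^ 2 + algebraMap R F c * b ^ 2
          = algebraMap R F t := by
        rw [hbc] at h
        rw [← h]
      have hkey : u 0 * X ^ 2 + c * Y ^ 2 = t * (s : R) ^ 2 := by
        apply hinj
        rw [map_add, _root_.map_mul, _root_.map_mul, _root_.map_mul,
          map_pow, map_pow, map_pow, hX', hY']
        linear_combination (algebraMap R F (s : R)) ^ 2 * hsum
      obtain ⟨x0, y0, hxy⟩ := Blem hϖ h2 (hu 0) hcalt hs0 hkey
      -- tail represents c * y0 ^ 2 over F
      have htail : (∑ i : Fin m, algebraMap R F (u i.succ) *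
          (a i.succ * algebraMap R F y0 / b) ^ 2) = algebraMap R F (c * y0 ^ 2) := by
        have hterm : ∀ i : Fin m, algebraMap R F (u i.succ) *
            (a i.succ * algebraMap R F y0 / b) ^ 2
            = (algebraMap R F (u i.succ) * a i.succ ^ 2) * (algebraMap R F y0 ^ 2 / b ^ 2) := by
          intro i
          field_simp
        rw [Finset.sum_congr rfl (fun i _ => hterm i), ← Finset.sum_mul, ← hr, hbc,
          _root_.map_mul, map_pow]
        field_simp
      obtain ⟨z, hz⟩ := ih (fun i => u i.succ) (fun i => hu i.succ) (c * y0 ^ 2) _ htail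
      obtain ⟨z, hz⟩ := ih (fun i => u i.succ) (fun i => hu i.succ) (c * y0 ^ 2) _ htail
      refine ⟨Fin.cons x0 z, ?_⟩
      rw [Fin.sum_univ_succ]
      simp only [Fin.cons_zero, Fin.cons_succ]
      rw [hz]
      linear_combination hxy

end Rep


section Main

variable {R : Type*} [CommRing R] [IsDomain R] [IsDiscreteValuationRing R]
variable {F : Type*} [Field F] [Algebra R F] [IsFractionRing R F]

lemma diag_quad {β : Type*} [CommRing β] {mm : ℕ} (d x : Fin mm → β) :
    x ⬝ᵥ (diagonal d *ᵥ x) = ∑ i, d i * x i ^ 2 := by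
  simp only [dotProduct, Matrix.mulVec_diagonal]
  apply Finset.sum_congr rfl
  intro i _
  ring

lemma bm_map_zero {β : Type*} [CommRing β] {mm : ℕ} (f : R →+* β) (a : R)
    (B : Matrix (Fin mm) (Fin mm) R) :
    (bm a 0 0 B).map f = bm (f a) 0 0 (B.map f) := by
  ext i j
  induction i using Fin.cases <;> induction j using Fin.cases <;> simp [Matrix.map_apply]

lemma isUnit_prod {β : Type*} [CommMonoid β] {mm : ℕ} (v : Fin mm → β)
    (hv : ∀ i, IsUnit (v i)) : IsUnit (∏ i, v i) :=
  Finset.prod_induction v IsUnit (fun _ _ => IsUnit.mul) isUnit_one (fun i _ => hv i)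

lemma mainAux {ϖ : R} (hϖ : Irreducible ϖ) (h2 : IsUnit (2 : R)) :
    ∀ (m : ℕ) (G G' : Matrix (Fin m) (Fin m) R), Gᵀ = G → G'ᵀ = G' →
      IsUnit G.det → IsUnit G'.det →
      Cong (G.map (algebraMap R F)) (G'.map (algebraMap R F)) → Cong G G' := by
  have h2F : (2 : F) ≠ 0 := by
    have h := h2.map (algebraMap R F)
    have h2' : algebraMap R F 2 = (2 : F) := by
      rw [map_ofNat]
    rw [h2'] at h
    exact h.ne_zero
  intro m
  induction m with
  | zero =>
    intro G G' _ _ _ _ _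
    exact ⟨1, by simp, by ext i j; exact i.elim0⟩
  | succ m ih =>
    intro G G' hGs hG's hGd hG'd hFcong
    obtain ⟨v, hv, hCv⟩ := diag h2 (m + 1) G hGs hGd
    obtain ⟨v', hv', hCv'⟩ := diag h2 (m + 1) G' hG's hG'd
    have hdF : Cong ((diagonal v).map (algebraMap R F)) ((diagonal v').map (algebraMap R F)) :=
      ((hCv.map (algebraMap R F)).symm.trans hFcong).trans (hCv'.map (algebraMap R F))
    have hdiagmap : ∀ (w : Fin (m + 1) → R), (diagonal w).map (algebraMap R F)
        = diagonal (fun i => algebraMap R F (w i)) := fun w => Matrix.diagonal_map (map_zero _)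
    have hdF2 := hdF
    rw [hdiagmap v, hdiagmap v'] at hdF2
    obtain ⟨P, hPd, hPc⟩ := hdF2
    have h00 := congrFun (congrFun hPc 0) 0
    rw [conj_apply, diag_quad, Matrix.diagonal_apply_eq] at h00
    obtain ⟨x, hx⟩ := rep hϖ h2 (m + 1) v hv (v' 0) (fun k => P k 0) h00
    have hxi : ∃ i₀, IsUnit (x i₀) := by
      by_contra hall
      push_neg at hall
      have hmem : ∀ i, v i * x i ^ 2 ∈ IsLocalRing.maximalIdeal R := fun i => by
        rw [IsLocalRing.mem_maximalIdeal]
        intro hunit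
        exact hall i ((isUnit_pow_iff (by norm_num : (2 : ℕ) ≠ 0)).mp
          (isUnit_of_mul_isUnit_right hunit))
      have hsum : v' 0 ∈ IsLocalRing.maximalIdeal R := by
        rw [← hx]
        exact Ideal.sum_mem _ (fun i _ => hmem i)
      exact (IsLocalRing.mem_maximalIdeal _).mp hsum (hv' 0)
    obtain ⟨i₀, hxi₀⟩ := hxi
    obtain ⟨G₁, hG₁s, hc1⟩ := split (diagonal v) (Matrix.diagonal_transpose v) x i₀ hxi₀
      (v' 0) (hv' 0) (by rw [diag_quad]; exact hx)
    have hvd : IsUnit (diagonal v).det := by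
      rw [Matrix.det_diagonal]
      exact isUnit_prod v hv
    have hbd : IsUnit (bm (v' 0) 0 0 G₁).det := hc1.isUnit_det hvd
    have hG₁d : IsUnit G₁.det := by
      rw [det_bm_row0] at hbd
      exact isUnit_of_mul_isUnit_right hbd
    have hWcong : Cong ((bm (v' 0) 0 0 G₁).map (algebraMap R F))
        ((diagonal v').map (algebraMap R F)) :=
      (hc1.map (algebraMap R F)).symm.trans hdF
    obtain ⟨PW, hPWd, hPWc⟩ := hWcong
    have hshape : PWᵀ * bm (algebraMap R F (v' 0)) 0 0 (G₁.map (algebraMap R F)) * PW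
        = bm (algebraMap R F (v' 0)) 0 0 ((diagonal (v' ∘ Fin.succ)).map (algebraMap R F)) := by
      rw [← bm_map_zero, ← bm_map_zero, ← diagonal_eq_bm]
      exact hPWc
    have hu0F : algebraMap R F (v' 0) ≠ 0 := ((hv' 0).map _).ne_zero
    have hdetMF : (bm (algebraMap R F (v' 0)) 0 0 (G₁.map (algebraMap R F))).det ≠ 0 := by
      rw [← bm_map_zero, ← RingHom.mapMatrix_apply, ← RingHom.map_det]
      exact (hbd.map _).ne_zero
    have hG₁sF : (G₁.map (algebraMap R F))ᵀ = G₁.map (algebraMap R F) := by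
      rw [← Matrix.transpose_map, hG₁s]
    have hcongF1 : Cong (G₁.map (algebraMap R F))
        ((diagonal (v' ∘ Fin.succ)).map (algebraMap R F)) :=
      witt h2F _ hu0F _ _ hG₁sF hdetMF PW hPWd hshape
    have hIH : Cong G₁ (diagonal (v' ∘ Fin.succ)) :=
      ih G₁ (diagonal (v' ∘ Fin.succ)) hG₁s (Matrix.diagonal_transpose _) hG₁d
        (by rw [Matrix.det_diagonal]; exact isUnit_prod _ (fun i => hv' i.succ)) hcongF1
    refine hCv.trans (hc1.trans (((hIH.bmLift (w := v' 0)).trans ?_).trans hCv'.symm))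
    rw [← diagonal_eq_bm]
    exact Cong.refl _

end Main

end QFAux

open QFAux in
/-- **Unimodular quadratic forms over a DVR that become isomorphic over the fraction field
are isomorphic.**  Let `R` be a discrete valuation ring with `2` invertible and `F` its
fraction field.  If `G, G'` are symmetric matrices over `R`, invertible over `R`, and there is
`P ∈ GL_n(F)` with `Pᵀ G P = G'` (over `F`), then there is `Q ∈ GL_n(R)` with `Qᵀ G Q = G'`. -/
theorem unimodular_quadratic_forms_rationally_isomorphic_iff_isomorphic
    {R F : Type*} [CommRing R] [IsDomain R] [IsDiscreteValuationRing R]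
    [Field F] [Algebra R F] [IsFractionRing R F]
    (h2 : IsUnit (2 : R)) {n : ℕ}
    (G G' : Matrix (Fin n) (Fin n) R) (hG : G.IsSymm) (hG' : G'.IsSymm)
    (hGunit : IsUnit G) (hG'unit : IsUnit G')
    (hrat : ∃ P : Matrix (Fin n) (Fin n) F, IsUnit P ∧
      Pᵀ * G.map (algebraMap R F) * P = G'.map (algebraMap R F)) :
    ∃ Q : Matrix (Fin n) (Fin n) R, IsUnit Q ∧ Qᵀ * G * Q = G' := by
  obtain ⟨ϖ, hϖ⟩ := IsDiscreteValuationRing.exists_irreducible R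
  obtain ⟨P, hP, hPc⟩ := hrat
  have hcongF : Cong (G.map (algebraMap R F)) (G'.map (algebraMap R F)) :=
    ⟨P, (Matrix.isUnit_iff_isUnit_det P).mp hP, hPc⟩
  obtain ⟨Q, hQ, hQc⟩ := mainAux (F := F) hϖ h2 n G G' hG.eq hG'.eq
    ((Matrix.isUnit_iff_isUnit_det G).mp hGunit)
    ((Matrix.isUnit_iff_isUnit_det G').mp hG'unit) hcongF
  exact ⟨Q, (Matrix.isUnit_iff_isUnit_det Q).mpr hQ, hQc⟩
end

section
/- Let R be a semilocal principal ideal domain and let Γ be a finite group whose order is invertible in R. Then a right module M over the group algebra R[Γ] is semisimple as an R[Γ]-module if and only if it is semisimple as an R-module. -/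
/-- If the Jacobson radical of a semilocal commutative ring kills a module, the module is
semisimple. -/
theorem aux_semisimple_of_jacobson_smul {R : Type*} [CommRing R]
    (hsl : {I : Ideal R | I.IsMaximal}.Finite)
    {M : Type*} [AddCommGroup M] [Module R M]
    (h : ∀ r ∈ Ideal.jacobson (⊥ : Ideal R), ∀ x : M, r • x = 0) :
    IsSemisimpleModule R M := by
  haveI : Finite {I : Ideal R | I.IsMaximal} := hsl.to_subtype
  set J := Ideal.jacobson (⊥ : Ideal R) with hJdef
  have hJ : J = ⨅ I : {I : Ideal R | I.IsMaximal}, I.1 := by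
    have hs : {K : Ideal R | ⊥ ≤ K ∧ K.IsMaximal} = {I : Ideal R | I.IsMaximal} := by
      ext K; simp
    rw [hJdef, Ideal.jacobson, hs, sInf_eq_iInf']
  letI : ∀ I : {I : Ideal R | I.IsMaximal}, Field (R ⧸ I.1) := fun I =>
    @Ideal.Quotient.field R _ I.1 I.2
  let e : (R ⧸ J) ≃+* ∀ I : {I : Ideal R | I.IsMaximal}, R ⧸ I.1 :=
    (Ideal.quotEquivOfEq hJ).trans
      (Ideal.quotientInfRingEquivPiQuotient _ fun I K hne =>
        Ideal.isCoprime_iff_sup_eq.mpr <| I.2.coprime_of_ne K.2 <| by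
          rwa [Ne, Subtype.coe_inj])
  haveI : IsSemisimpleRing (R ⧸ J) := e.symm.isSemisimpleRing
  have ht : Module.IsTorsionBySet R M (J : Set R) := fun x r => h r r.2 x
  letI : Module (R ⧸ J) M := ht.module
  haveI : IsSemisimpleModule (R ⧸ J) M := inferInstance
  let l : M →ₛₗ[Ideal.Quotient.mk J] M :=
    { toFun := id, map_add' := fun _ _ => rfl,
      map_smul' := fun r x => (ht.mk_smul r x).symm }
  exact (l.isSemisimpleModule_iff_of_bijective Function.bijective_id).mpr inferInstance


open MulOpposite

set_option maxHeartbeats 2000000 in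
theorem aux_jacobson_smul_of_isSemisimple
    {R : Type*} [CommRing R] [IsDomain R] [IsPrincipalIdealRing R]
    {Γ : Type*} [Group Γ] [Finite Γ]
    {M : Type*} [AddCommGroup M] [Module (MonoidAlgebra R Γ)ᵐᵒᵖ M]
    [Module R M] [IsScalarTower R (MonoidAlgebra R Γ)ᵐᵒᵖ M]
    (hM : IsSemisimpleModule (MonoidAlgebra R Γ)ᵐᵒᵖ M) :
    ∀ r ∈ Ideal.jacobson (⊥ : Ideal R), ∀ x : M, r • x = 0 := by
  set A := (MonoidAlgebra R Γ)ᵐᵒᵖ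
  haveI := Fintype.ofFinite Γ
  set J := Ideal.jacobson (⊥ : Ideal R) with hJdef
  -- key: J kills every simple A-submodule
  have key : ∀ S : Submodule A M, IsSimpleModule A S →
      ∀ r ∈ J, ∀ x ∈ S, r • x = 0 := by
    intro S hS r hr x hx
    haveI := hS
    let N' : Submodule R M := J • (S.restrictScalars R)
    let N : Submodule A M :=
      { carrier := N'
        add_mem' := fun ha hb => N'.add_mem ha hb
        zero_mem' := N'.zero_mem
        smul_mem' := by
          intro a y hy
          refine Submodule.smul_induction_on hy (fun c hc m hm => ?_)
            (fun y z hy' hz' => ?_)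
          · rw [smul_comm]
            exact Submodule.smul_mem_smul hc (S.smul_mem a hm)
          · rw [smul_add]; exact N'.add_mem hy' hz' }
    have hNS : N ≤ S := by
      intro y hy
      have hy2 : y ∈ N' := hy
      refine Submodule.smul_induction_on hy2
        (fun c _ m hm => ?_) (fun y z hy' hz' => S.add_mem hy' hz')
      exact (S.restrictScalars R).smul_mem c hm
    have hAtom : IsAtom S := (isSimpleModule_iff_isAtom).mp hS
    have hNbot : N = ⊥ := by
      by_contra hne
      have hNSeq : N = S := by
        rcases hNS.lt_or_eq with hlt | heq
        · exact absurd (hAtom.2 _ hlt) hne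
        · exact heq
      -- then N' = S.restrictScalars R, contradicting Nakayama
      have hcar : N' = S.restrictScalars R := by
        ext y
        constructor
        · intro hy; exact hNS hy
        · intro hy
          have : y ∈ N := by rw [hNSeq]; exact hy
          exact this
      -- S is finitely generated over R
      have hfgA : (S : Submodule A M).FG := by
        obtain ⟨y, hyS, hy0⟩ := Submodule.exists_mem_ne_zero_of_ne_bot hAtom.1
        refine ⟨{y}, ?_⟩
        have hle : Submodule.span A {y} ≤ S := by
          rw [Submodule.span_le, Set.singleton_subset_iff]; exact hyS
        rcases hle.lt_or_eq with hlt | heq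
        · exact absurd (hAtom.2 _ hlt) (by
            simp only [Submodule.span_singleton_eq_bot]
            exact hy0)
        · simpa using heq
      haveI : Module.Finite A S := Module.Finite.iff_fg.mpr hfgA
      haveI : Module.Finite R (MonoidAlgebra R Γ) :=
        inferInstance
      haveI : Module.Finite R A :=
        Module.Finite.equiv (MulOpposite.opLinearEquiv R)
      haveI : Module.Finite R S := Module.Finite.trans A S
      have hfgR : (S.restrictScalars R).FG := by
        rw [← Module.Finite.iff_fg]
        exact ‹Module.Finite R S›
      have hNak := Submodule.eq_bot_of_le_smul_of_le_jacobson_bot J (S.restrictScalars R)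
        hfgR (le_of_eq hcar.symm) le_rfl
      have hSbot : S = ⊥ := by
        rw [eq_bot_iff]
        intro z hz
        have hz' : z ∈ S.restrictScalars R := hz
        rw [hNak] at hz'
        exact hz'
      exact hAtom.1 hSbot
    have h1 : r • x ∈ N' := Submodule.smul_mem_smul hr hx
    have : r • x ∈ N := h1
    rw [hNbot] at this
    simpa using this
  intro r hr x
  have hx : x ∈ sSup {m : Submodule A M | IsSimpleModule A m} := by
    rw [IsSemisimpleModule.sSup_simples_eq_top]; trivial
  rw [sSup_eq_iSup'] at hx
  refine Submodule.iSup_induction (motive := fun y => r • y = 0) _ hx ?_ (by simp) ?_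
  · rintro ⟨S, hS⟩ y hyS
    exact key S hS r hr y hyS
  · intro y z hy hz; rw [smul_add, hy, hz, add_zero]


open MulOpposite Finset

set_option maxHeartbeats 1000000 in
theorem aux_isSemisimple_mop_of_isSemisimple
    {R : Type*} [CommRing R]
    {Γ : Type*} [Group Γ] [Finite Γ] (hΓ : IsUnit ((Nat.card Γ : R)))
    {M : Type*} [AddCommGroup M] [Module (MonoidAlgebra R Γ)ᵐᵒᵖ M]
    [Module R M] [IsScalarTower R (MonoidAlgebra R Γ)ᵐᵒᵖ M]
    (hR : IsSemisimpleModule R M) :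
    IsSemisimpleModule (MonoidAlgebra R Γ)ᵐᵒᵖ M := by
  haveI := Fintype.ofFinite Γ
  haveI : ComplementedLattice (Submodule R M) := hR.toComplementedLattice
  rw [isSemisimpleModule_iff]
  constructor
  intro p
  obtain ⟨q, hq⟩ := exists_isCompl (p.restrictScalars R)
  let π : M →ₗ[R] M :=
    (p.restrictScalars R).subtype ∘ₗ (p.restrictScalars R).linearProjOfIsCompl q hq
  have hπmem : ∀ x, π x ∈ p := fun x =>
    ((p.restrictScalars R).linearProjOfIsCompl q hq x).2
  have hπid : ∀ x ∈ p, π x = x := by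
    intro x hx
    have : (p.restrictScalars R).linearProjOfIsCompl q hq x = ⟨x, hx⟩ :=
      Submodule.linearProjOfIsCompl_apply_left hq ⟨x, hx⟩
    simp [π, this]
  let σ : Γ → (MonoidAlgebra R Γ)ᵐᵒᵖ := fun g => op (MonoidAlgebra.of R Γ g)
  have σmul : ∀ g h : Γ, σ g * σ h = σ (h * g) := by
    intro g h
    simp only [σ, ← op_mul, ← map_mul]
  have σone : σ 1 = 1 := by
    show op (MonoidAlgebra.of R Γ 1) = 1
    rw [map_one, op_one]
  set u : R := ↑hΓ.unit⁻¹ with hu_def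
  have hu : u * (Nat.card Γ : R) = 1 := by
    have h2 := hΓ.val_inv_mul
    rw [hu_def]
    exact h2
  let F : M →ₗ[R] M :=
    { toFun := fun x => u • ∑ g : Γ, σ g⁻¹ • π (σ g • x)
      map_add' := by
        intro x y
        simp only [smul_add, map_add]
        rw [Finset.sum_add_distrib, smul_add]
      map_smul' := by
        intro r x
        simp only [RingHom.id_apply]
        calc u • ∑ g : Γ, σ g⁻¹ • π (σ g • r • x)
            = u • ∑ g : Γ, r • (σ g⁻¹ • π (σ g • x)) := by
              refine congrArg (u • ·) (Finset.sum_congr rfl fun g _ => ?_)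
              rw [smul_comm (σ g) r x, map_smul, smul_comm]
          _ = r • (u • ∑ g : Γ, σ g⁻¹ • π (σ g • x)) := by
              rw [← Finset.smul_sum, smul_comm] }
  have hFσ : ∀ (h : Γ) (x : M), F (σ h • x) = σ h • F x := by
    intro h x
    show u • ∑ g : Γ, σ g⁻¹ • π (σ g • σ h • x) = σ h • (u • ∑ g : Γ, σ g⁻¹ • π (σ g • x))
    rw [smul_comm (σ h) u]
    congr 1
    rw [Finset.smul_sum]
    refine Fintype.sum_equiv (Equiv.mulLeft h) _ _ fun g => ?_
    simp only [Equiv.coe_mulLeft]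
    rw [← mul_smul (σ g) (σ h) x, σmul, ← mul_smul (σ h) (σ (h * g)⁻¹), σmul]
    congr 2
    group
  have hFlin : ∀ (a : (MonoidAlgebra R Γ)ᵐᵒᵖ) (x : M), F (a • x) = a • F x := by
    intro a x
    induction a using MulOpposite.rec' with
    | h b =>
      induction b using MonoidAlgebra.induction_on with
      | of g => exact hFσ g x
      | add f g hf hg => rw [op_add, add_smul, add_smul, map_add, hf, hg]
      | smul r f hf =>
        rw [op_smul, smul_assoc, map_smul, hf, smul_assoc]
  have hFmem : ∀ x, F x ∈ p := by
    intro x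
    have : (∑ g : Γ, σ g⁻¹ • π (σ g • x)) ∈ p :=
      Submodule.sum_mem _ fun g _ => p.smul_mem _ (hπmem _)
    exact (p.restrictScalars R).smul_mem u this
  have hFid : ∀ x ∈ p, F x = x := by
    intro x hx
    show u • ∑ g : Γ, σ g⁻¹ • π (σ g • x) = x
    have : ∀ g : Γ, σ g⁻¹ • π (σ g • x) = x := by
      intro g
      rw [hπid _ (p.smul_mem _ hx), ← mul_smul, σmul]
      simp [σone]
    simp only [this, Finset.sum_const, Finset.card_univ]
    rw [← Nat.cast_smul_eq_nsmul R, smul_smul, Nat.card_eq_fintype_card] at *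
    rw [hu, one_smul]
  let Φ : M →ₗ[(MonoidAlgebra R Γ)ᵐᵒᵖ] p :=
    { toFun := fun x => ⟨F x, hFmem x⟩
      map_add' := fun x y => Subtype.ext (F.map_add x y)
      map_smul' := fun a x => Subtype.ext (hFlin a x) }
  exact ⟨LinearMap.ker Φ, LinearMap.isCompl_of_proj fun x => Subtype.ext (hFid x x.2)⟩


/-- **Semisimplicity over `R[Γ]` versus semisimplicity over `R`.**  Let `R` be a semilocal
principal ideal domain (a PID with finitely many maximal ideals) and `Γ` a finite group whose
order is invertible in `R`.  A right `R[Γ]`-module `M` is semisimple over `R[Γ]` if and only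
if it is semisimple over `R`. -/
theorem semisimple_over_group_algebra_iff_semisimple_over_base
    {R : Type*} [CommRing R] [IsDomain R] [IsPrincipalIdealRing R]
    (hsemilocal : {I : Ideal R | I.IsMaximal}.Finite)
    {Γ : Type*} [Group Γ] [Finite Γ] (hΓ : IsUnit ((Nat.card Γ : R)))
    {M : Type*} [AddCommGroup M] [Module (MonoidAlgebra R Γ)ᵐᵒᵖ M]
    [Module R M] [IsScalarTower R (MonoidAlgebra R Γ)ᵐᵒᵖ M] :
    IsSemisimpleModule (MonoidAlgebra R Γ)ᵐᵒᵖ M ↔ IsSemisimpleModule R M := by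
  constructor
  · intro hM
    exact aux_semisimple_of_jacobson_smul hsemilocal
      (aux_jacobson_smul_of_isSemisimple hM)
  · intro hR
    exact aux_isSemisimple_mop_of_isSemisimple hΓ hR
end
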